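/- arXiv:1807.11026 — 2 statements merged into one kernel-verified Lean document; each statement's English description precedes it below -/
import Mathlib

section
/- For every rational tangle word (a_1, …, a_n), the connectivity state after all crossings of the word have been applied equals X if and only if the total number of NSI-labeled crossings of the word is odd. (Since a rational tangle has a closure that is a two-component link pseudodiagram exactly when its final connectivity state is H or V, this says such a closure exists if and only if the number of NSIs is even.) -/
/-- The three connectivity states of a partially built rational tangle:
`H = {NW–NE, SW–SE}`, `V = {NW–SW, NE–SE}`, `X = {NW–SE, NE–SW}`. -/
inductive TState : Type
  | H
  | V
  | X
  deriving DecidableEq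

/-- Effect of a bottom crossing (a twist of SW and SE) on the connectivity state. -/
def bstep : TState → TState
  | .H => .H
  | .V => .X
  | .X => .V

/-- Effect of a right crossing (a twist of NE and SE) on the connectivity state. -/
def rstep : TState → TState
  | .V => .V
  | .H => .X
  | .X => .H

/-- `step true` is a bottom crossing, `step false` is a right crossing. -/
def step : Bool → TState → TState
  | true => bstep
  | false => rstep

/-- The twist direction of the (0-based) `i`-th syllable: bottom iff `i` is even
(1-based odd syllables are bottom twists). -/
def sylDir (i : ℕ) : Bool := decide (i % 2 = 0)

/-- The state in which a crossing of the (0-based) `i`-th syllable is a self-intersection: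
`H` for bottom syllables, `V` for right syllables. -/
def siState (i : ℕ) : TState := if i % 2 = 0 then TState.H else TState.V

/-- Process a list of syllables starting from state `s`; the Boolean `b` records
whether the next syllable is a bottom syllable. Each syllable `a` applies
`|a|` crossings of the appropriate direction. -/
def runWord : List ℤ → Bool → TState → TState
  | [], _, s => s
  | a :: t, b, s => runWord t (!b) ((step b)^[a.natAbs] s)

/-- The connectivity state at the start of the (0-based) `i`-th syllable of the word `w`
(a rational tangle word starts in state `V`). -/
def stateAt (w : List ℤ) (i : ℕ) : TState := runWord (w.take i) true TState.V

/-- The (0-based) `i`-th syllable of `w` is an SI syllable. -/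
def IsSISyl (w : List ℤ) (i : ℕ) : Prop := stateAt w i = siState i

instance (w : List ℤ) (i : ℕ) : Decidable (IsSISyl w i) :=
  inferInstanceAs (Decidable (_ = _))

/-- The total number of NSI-labeled crossings of the word `w`: a crossing is counted
if it is applied in a state different from the SI state of its twist direction. -/
def nsiCrossCount (w : List ℤ) : ℕ :=
  ∑ i ∈ Finset.range w.length,
    ((Finset.range (w.getD i 0).natAbs).filter
      (fun j => (step (sylDir i))^[j] (stateAt w i) ≠ siState i)).card

lemma step_invol (b : Bool) (s : TState) : step b (step b s) = s := by
  cases b <;> cases s <;> rfl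

lemma step_fix (b : Bool) :
    step b (if b then TState.H else TState.V) = (if b then TState.H else TState.V) := by
  cases b <;> rfl

lemma iterate_step (b : Bool) (k : ℕ) (s : TState) :
    (step b)^[k] s = if Even k then s else step b s := by
  induction k with
  | zero => simp
  | succ n ih =>
    rw [Function.iterate_succ_apply', ih]
    by_cases h : Even n
    · simp [h, Nat.even_add_one]
    · simp [h, Nat.even_add_one, step_invol]

lemma siState_eq (i : ℕ) : siState i = if sylDir i then TState.H else TState.V := by
  simp [siState, sylDir]

lemma syl (b : Bool) (s : TState) (k : ℕ) :
    ((step b)^[k] s = TState.X ↔ s = TState.X) ↔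
      Even (((Finset.range k).filter
        (fun j => (step b)^[j] s ≠ (if b then TState.H else TState.V))).card) := by
  by_cases hs : s = (if b then TState.H else TState.V)
  · have hfix : ∀ j, (step b)^[j] s = s := by
      intro j; rw [hs]; exact Function.iterate_fixed (step_fix b) j
    have hcard : (((Finset.range k).filter
        (fun j => (step b)^[j] s ≠ (if b then TState.H else TState.V)))).card = 0 := by
      rw [Finset.card_eq_zero, Finset.filter_eq_empty_iff]
      intro j _
      simp only [ne_eq, not_not, hfix j]
      exact hs
    simp [hcard, hfix k]
  · have hfs : step b s ≠ (if b then TState.H else TState.V) := by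
      intro h
      have h2 : s = step b (step b s) := (step_invol b s).symm
      rw [h, step_fix b] at h2
      exact hs h2
    have hcond : ∀ j, (step b)^[j] s ≠ (if b then TState.H else TState.V) := by
      intro j
      rw [iterate_step]
      by_cases h : Even j
      · simpa [h] using hs
      · simpa [h] using hfs
    have hcard : (((Finset.range k).filter
        (fun j => (step b)^[j] s ≠ (if b then TState.H else TState.V)))).card = k := by
      rw [Finset.filter_true_of_mem (fun j _ => hcond j), Finset.card_range]
    rw [hcard, iterate_step]
    cases b <;> cases s <;> by_cases hk : Even k <;>
      simp_all [step, bstep, rstep]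

lemma runWord_append (l1 l2 : List ℤ) (b : Bool) (s : TState) :
    runWord (l1 ++ l2) b s = runWord l2 ((! ·)^[l1.length] b) (runWord l1 b s) := by
  induction l1 generalizing b s with
  | nil => rfl
  | cons a t ih =>
    simp only [List.cons_append, runWord, List.length_cons,
      Function.iterate_succ_apply, List.append_eq]
    exact ih (!b) _

lemma not_iter (n : ℕ) : (! ·)^[n] true = sylDir n := by
  induction n with
  | zero => rfl
  | succ m ih =>
    rw [Function.iterate_succ_apply', ih]
    rcases Nat.mod_two_eq_zero_or_one m with h | h <;>
      simp [sylDir, h, Nat.succ_mod_two_eq_zero_iff, Nat.succ_mod_two_eq_one_iff]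

lemma take_succ_getD (w : List ℤ) (n : ℕ) (h : n < w.length) :
    w.take (n + 1) = w.take n ++ [w.getD n 0] := by
  rw [List.take_succ]
  congr 1
  rw [List.getD_eq_getElem w 0 h]
  simp [List.getElem?_eq_getElem h]

lemma stateAt_succ (w : List ℤ) (n : ℕ) (h : n < w.length) :
    stateAt w (n + 1) = (step (sylDir n))^[(w.getD n 0).natAbs] (stateAt w n) := by
  unfold stateAt
  rw [take_succ_getD w n h, runWord_append]
  have hlen : (w.take n).length = n := by rw [List.length_take]; omega
  rw [hlen, not_iter]
  rfl

lemma main_aux (w : List ℤ) : ∀ n, n ≤ w.length →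
    (stateAt w n = TState.X ↔ Odd (∑ i ∈ Finset.range n,
      ((Finset.range (w.getD i 0).natAbs).filter
        (fun j => (step (sylDir i))^[j] (stateAt w i) ≠ siState i)).card)) := by
  intro n
  induction n with
  | zero => intro _; simp [stateAt, runWord]
  | succ m ih =>
    intro h
    have hm : m < w.length := h
    have IH := ih hm.le
    have hsyl := syl (sylDir m) (stateAt w m) (w.getD m 0).natAbs
    rw [Finset.sum_range_succ, stateAt_succ w m hm, Nat.odd_add, siState_eq m]
    tauto


/-- the connectivity state after all crossings of a rational tangle word
have been applied equals `X` if and only if the total number of NSI-labeled crossings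
of the word is odd. -/
theorem final_state_X_iff_odd_nsi (w : List ℤ) :
    stateAt w w.length = TState.X ↔ Odd (nsiCrossCount w) := by
  exact main_aux w w.length le_rfl
end

section
/- Let k ≥ 3, let n_1 and n_k be odd natural numbers, and let n_i be even for all 1 < i < k. In the resolution game on (n_1, …, n_k), the second player can force the resulting word to satisfy s_1 = −s_k ∈ {1, −1} and s_i = 0 for all 1 < i < k. -/
section SignGame

variable {C : Type*} [Fintype C]

/-- A play of the sign-assignment game is a list of moves, each assigning a sign to a
crossing; it is legal if no crossing is chosen twice and every sign is `+1` or `-1`. -/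
def LegalPlay (p : List (C × ℤ)) : Prop :=
  (p.map Prod.fst).Nodup ∧ ∀ m ∈ p, m.2 = 1 ∨ m.2 = -1

/-- The play `p` follows the strategy `σ` of the player who moves at all positions whose
number of prior moves is congruent to `parity` mod 2 (`parity = 0`: first player;
`parity = 1`: second player). -/
def Follows (parity : ℕ) (σ : List (C × ℤ) → C × ℤ) (p : List (C × ℤ)) : Prop :=
  ∀ (i : ℕ) (hi : i < p.length), i % 2 = parity → p.get ⟨i, hi⟩ = σ (p.take i)

/-- The strategy `σ` always produces a legal move (an unchosen crossing with sign `±1`)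
at the positions where its player is to move. -/
def LegalStrat (parity : ℕ) (σ : List (C × ℤ) → C × ℤ) : Prop :=
  ∀ p : List (C × ℤ), LegalPlay p → p.length % 2 = parity → p.length < Fintype.card C →
    (σ p).1 ∉ p.map Prod.fst ∧ ((σ p).2 = 1 ∨ (σ p).2 = -1)

/-- The player moving at positions of parity `parity` can force the predicate `P` on
complete plays: they have a legal strategy such that every complete legal play following
it satisfies `P`. -/
def CanForce (parity : ℕ) (P : List (C × ℤ) → Prop) : Prop :=
  ∃ σ : List (C × ℤ) → C × ℤ, LegalStrat parity σ ∧
    ∀ p : List (C × ℤ), LegalPlay p → p.length = Fintype.card C → Follows parity σ p → P p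

end SignGame

section Pairing

variable {C : Type*} [Fintype C] [Nonempty C]

attribute [local instance] Classical.propDecidable

/-- fallback move: any unchosen crossing, with sign `1`. -/
noncomputable def fbMove (p : List (C × ℤ)) : C × ℤ :=
  if h : ∃ c : C, c ∉ p.map Prod.fst then (h.choose, 1) else (Classical.arbitrary C, 1)

/-- pairing strategy: respond to the last move `(c,s)` with `(f c, -s)` if possible. -/
noncomputable def pairStrat (f : C → C) (p : List (C × ℤ)) : C × ℤ :=
  if h : ∃ m : C × ℤ, p.getLast? = some m ∧ f m.1 ∉ p.map Prod.fst then
    (f h.choose.1, -h.choose.2)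
  else fbMove p

theorem fbMove_spec {p : List (C × ℤ)} (hnd : (p.map Prod.fst).Nodup)
    (hlt : p.length < Fintype.card C) :
    (fbMove p).1 ∉ p.map Prod.fst ∧ (fbMove p).2 = 1 := by
  have hex : ∃ c : C, c ∉ p.map Prod.fst := by
    by_contra h
    push_neg at h
    have hsub : (Finset.univ : Finset C) ⊆ (p.map Prod.fst).toFinset := fun c _ =>
      List.mem_toFinset.2 (h c)
    have := Finset.card_le_card hsub
    rw [List.toFinset_card_of_nodup hnd, Finset.card_univ, List.length_map] at this
    omega
  rw [fbMove, dif_pos hex]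
  exact ⟨hex.choose_spec, rfl⟩

theorem even_card_of_involution (f : C → C) (hinv : Function.Involutive f)
    (hfix : ∀ c, f c ≠ c) : Even (Fintype.card C) := by
  have h : ((Fintype.card C : ℕ) : ZMod 2) = 0 := by
    rw [← Finset.card_univ, Finset.card_eq_sum_ones, Nat.cast_sum]
    exact Finset.sum_involution (fun a _ => f a) (fun a _ => by decide)
      (fun a _ _ => hfix a) (fun a _ => Finset.mem_univ _) (fun a _ => hinv a)
  rw [ZMod.natCast_eq_zero_iff] at h
  exact (even_iff_two_dvd).2 h

theorem canForce_pairing (f : C → C) (hinv : Function.Involutive f)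
    (hfix : ∀ c, f c ≠ c) :
    CanForce (C := C) 1 (fun p => ∀ m ∈ p, (f m.1, -m.2) ∈ p) := by
  refine ⟨pairStrat f, ?_, ?_⟩
  · intro p hleg hpar hlt
    by_cases hx : ∃ m : C × ℤ, p.getLast? = some m ∧ f m.1 ∉ p.map Prod.fst
    · obtain ⟨hsome, hnot⟩ := hx.choose_spec
      rw [pairStrat, dif_pos hx]
      refine ⟨hnot, ?_⟩
      have hmem : hx.choose ∈ p := by
        obtain ⟨ys, hys⟩ := List.getLast?_eq_some_iff.1 hsome
        have h2 : hx.choose ∈ ys ++ [hx.choose] := by simp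
        rwa [← hys] at h2
      show -hx.choose.2 = 1 ∨ -hx.choose.2 = -1
      rcases hleg.2 _ hmem with h | h
      · right; rw [h]
      · left; rw [h]; norm_num
    · rw [pairStrat, dif_neg hx]
      have := fbMove_spec hleg.1 hlt
      exact ⟨this.1, Or.inl this.2⟩
  · intro p hleg hlen hfol
    have hnd : (p.map Prod.fst).Nodup := hleg.1
    have key : ∀ t : ℕ, 2 * t ≤ p.length →
        ∀ m ∈ p.take (2 * t), ((f m.1, -m.2) : C × ℤ) ∈ p.take (2 * t) := by
      intro t
      induction t with
      | zero => simp
      | succ t ih =>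
        intro hle
        have h2t : 2 * t < p.length := by omega
        have h2t1 : 2 * t + 1 < p.length := by omega
        have hq := ih (by omega)
        set q := p.take (2 * t) with hqdef
        set a := p.get ⟨2 * t, h2t⟩ with hadef
        set b := p.get ⟨2 * t + 1, h2t1⟩ with hbdef
        have htake1 : p.take (2 * t + 1) = q ++ [a] := by
          rw [hqdef, hadef]
          exact (List.take_concat_get' p (2 * t) h2t).symm
        have htake2 : p.take (2 * t + 2) = (q ++ [a]) ++ [b] := by
          rw [← htake1, hbdef]
          exact (List.take_concat_get' p (2 * t + 1) h2t1).symm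
        have hnd1 : ((q ++ [a]).map Prod.fst).Nodup := by
          rw [← htake1]
          exact ((p.take_sublist _).map Prod.fst).nodup hnd
        have hanotq : a.1 ∉ q.map Prod.fst := by
          rw [List.map_append] at hnd1
          have := (List.nodup_append.1 hnd1).2.2
          intro hmem
          exact this _ hmem _ (by simp) rfl
        have hfa : f a.1 ∉ (q ++ [a]).map Prod.fst := by
          rw [List.map_append]
          intro hmem
          rcases List.mem_append.1 hmem with hmem | hmem
          · obtain ⟨m, hmq, hm1⟩ := List.mem_map.1 hmem
            have := hq m hmq
            have : a.1 ∈ q.map Prod.fst := by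
              have h2 : (f m.1, -m.2).1 = a.1 := by
                simp only [hm1]
                exact hinv a.1
              exact h2 ▸ List.mem_map_of_mem (f := Prod.fst) this
            exact hanotq this
          · simp at hmem
            exact hfix a.1 hmem
        have hx : ∃ m : C × ℤ, (q ++ [a]).getLast? = some m ∧
            f m.1 ∉ (q ++ [a]).map Prod.fst := ⟨a, (List.getLast?_concat : (q ++ [a]).getLast? = some a), hfa⟩
        have hb' : b = (f a.1, -a.2) := by
          have hfb := hfol (2 * t + 1) h2t1 (by omega)
          rw [htake1] at hfb
          have hcs : hx.choose = a := by
            exact (Option.some.inj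
              ((((List.getLast?_concat : (q ++ [a]).getLast? = some a)).symm.trans hx.choose_spec.1))).symm
          rw [hbdef, hfb, pairStrat, dif_pos hx, hcs]
        have h22 : 2 * (t + 1) = 2 * t + 2 := by omega
        rw [h22, htake2]
        intro m hm
        rcases List.mem_append.1 hm with hm | hm
        · rcases List.mem_append.1 hm with hm | hm
          · exact List.mem_append.2 (Or.inl (List.mem_append.2 (Or.inl (hq m hm))))
          · simp only [List.mem_singleton] at hm
            subst hm
            rw [← hb']
            simp
        · simp only [List.mem_singleton] at hm
          subst hm
          rw [hb']
          have heq : ((f (f a.1), - -a.2) : C × ℤ) = a := by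
            rw [hinv a.1, neg_neg]
          rw [heq]
          simp
    obtain ⟨T, hT⟩ := even_card_of_involution f hinv hfix
    have hlen2 : p.length = 2 * T := by omega
    have := key T (by omega)
    rwa [← hlen2, List.take_length] at this

end Pairing

/-- The crossings of the resolution game on syllable sizes `n = (n_1, …, n_k)`:
pairs `(i, j)` with `i` a syllable index and `j < n_i`. -/
abbrev Cr (n : List ℕ) : Type := Σ i : Fin n.length, Fin (n.get i)

/-- The resulting word `(s_1, …, s_k)` of a complete play of the resolution game:
`s_i` is the sum of the signs assigned to the crossings of the `i`-th syllable. -/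
def result (n : List ℕ) (p : List (Cr n × ℤ)) : List ℤ :=
  (List.finRange n.length).map fun i =>
    ((p.filter fun m => decide (m.1.1 = i)).map Prod.snd).sum

/-- in the resolution game on `(n_1, …, n_k)` with `k ≥ 3`, `n_1` and
`n_k` odd, and all intermediate `n_i` even, the second player can force
`s_1 = -s_k ∈ {1, -1}` and `s_i = 0` for all `1 < i < k`. -/
theorem second_forces_opposite_ends (n : List ℕ) (hk : 3 ≤ n.length)
    (h1 : Odd (n.getD 0 0)) (hlast : Odd (n.getD (n.length - 1) 0))
    (hmid : ∀ i : ℕ, 0 < i → i < n.length - 1 → Even (n.getD i 0)) :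
    CanForce (C := Cr n) 1 (fun p =>
      ((result n p).getD 0 0 = 1 ∨ (result n p).getD 0 0 = -1) ∧
      (result n p).getD 0 0 = -((result n p).getD (n.length - 1) 0) ∧
      ∀ i : ℕ, 0 < i → i < n.length - 1 → (result n p).getD i 0 = 0) := by
  classical
  have hk0 : 0 < n.length := by omega
  have hkK : n.length - 1 < n.length := by omega
  have hN0 : n.getD 0 0 = n.get ⟨0, hk0⟩ := List.getD_eq_getElem n 0 hk0
  have hNK : n.getD (n.length - 1) 0 = n.get ⟨n.length - 1, hkK⟩ :=
    List.getD_eq_getElem n 0 hkK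
  rw [hN0] at h1
  rw [hNK] at hlast
  have hodd0 : n.get ⟨0, hk0⟩ % 2 = 1 := Nat.odd_iff.1 h1
  have hoddK : n.get ⟨n.length - 1, hkK⟩ % 2 = 1 := Nat.odd_iff.1 hlast
  have hN0pos : 0 < n.get ⟨0, hk0⟩ := h1.pos
  have hNKpos : 0 < n.get ⟨n.length - 1, hkK⟩ := hlast.pos
  have hmid' : ∀ i : Fin n.length, 0 < i.val → i.val < n.length - 1 →
      n.get i % 2 = 0 := by
    intro i hi1 hi2
    have := hmid i.val hi1 hi2
    rw [List.getD_eq_getElem n 0 i.isLt] at this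
    rw [List.get_eq_getElem]
    exact Nat.even_iff.1 this
  -- the two special crossings
  set c0 : Cr n := ⟨⟨0, hk0⟩, ⟨n.get ⟨0, hk0⟩ - 1, by omega⟩⟩ with hc0def
  set cK : Cr n := ⟨⟨n.length - 1, hkK⟩,
    ⟨n.get ⟨n.length - 1, hkK⟩ - 1, by omega⟩⟩ with hcKdef
  have hCrEq : ∀ x y : Cr n, x = y ↔ x.1.val = y.1.val ∧ x.2.val = y.2.val := by
    intro x y
    constructor
    · rintro rfl; exact ⟨rfl, rfl⟩
    · rintro ⟨hh1, hh2⟩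
      obtain ⟨i, j⟩ := x
      obtain ⟨i', j'⟩ := y
      simp only at hh1 hh2
      have hii : i = i' := Fin.ext hh1
      subst hii
      have hjj : j = j' := Fin.ext hh2
      subst hjj
      rfl
  have hcv0 : (c0.1 : ℕ) = 0 := rfl
  have hcw0 : (c0.2 : ℕ) = n.get ⟨0, hk0⟩ - 1 := rfl
  have hcvK : (cK.1 : ℕ) = n.length - 1 := rfl
  have hcwK : (cK.2 : ℕ) = n.get ⟨n.length - 1, hkK⟩ - 1 := rfl
  have hvmk : ∀ (m : ℕ) (hm : m < n.length), ((⟨m, hm⟩ : Fin n.length) : ℕ) = m :=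
    fun _ _ => rfl
  have hc0K : c0 ≠ cK := by
    intro h
    obtain ⟨hv, -⟩ := (hCrEq _ _).1 h
    rw [hcv0, hcvK] at hv
    omega
  -- bound for the pairing map within a syllable
  have hbound : ∀ x : Cr n, x ≠ c0 → x ≠ cK →
      (if x.2.val % 2 = 0 then x.2.val + 1 else x.2.val - 1) < n.get x.1 := by
    intro x hx0 hxK
    have hjlt : x.2.val < n.get x.1 := x.2.isLt
    by_cases hpar : x.2.val % 2 = 0
    · rw [if_pos hpar]
      by_cases hi0 : x.1.val = 0
      · have hx1 : x.1 = ⟨0, hk0⟩ := Fin.ext hi0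
        have hxne : x.2.val ≠ n.get ⟨0, hk0⟩ - 1 := by
          intro hh
          exact hx0 ((hCrEq x c0).2 ⟨hi0, hh⟩)
        have hgv : n.get x.1 = n.get ⟨0, hk0⟩ := by rw [hx1]
        omega
      by_cases hiK : x.1.val = n.length - 1
      · have hx1 : x.1 = ⟨n.length - 1, hkK⟩ := Fin.ext hiK
        have hxne : x.2.val ≠ n.get ⟨n.length - 1, hkK⟩ - 1 := by
          intro hh
          exact hxK ((hCrEq x cK).2 ⟨hiK, hh⟩)
        have hgv : n.get x.1 = n.get ⟨n.length - 1, hkK⟩ := by rw [hx1]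
        omega
      · have heven := hmid' x.1 (by omega) (by have := x.1.isLt; omega)
        omega
    · rw [if_neg hpar]
      omega
  -- the pairing map
  obtain ⟨f, hinv, hfix, hfc0, hsyl⟩ :
      ∃ f : Cr n → Cr n, Function.Involutive f ∧ (∀ x, f x ≠ x) ∧ f c0 = cK ∧
        (∀ x : Cr n, x ≠ c0 → x ≠ cK → (f x).1 = x.1) := by
    refine ⟨fun x => if h0 : x = c0 then cK else if hK : x = cK then c0
      else ⟨x.1, ⟨_, hbound x h0 hK⟩⟩, ?_, ?_, ?_, ?_⟩
    · -- involutive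
      intro x
      dsimp only
      by_cases h0 : x = c0
      · subst h0
        rw [dif_pos rfl, dif_neg (Ne.symm hc0K), dif_pos rfl]
      by_cases hK : x = cK
      · subst hK
        rw [dif_neg h0, dif_pos rfl, dif_pos rfl]
      · rw [dif_neg h0, dif_neg hK]
        set y : Cr n := ⟨x.1, ⟨_, hbound x h0 hK⟩⟩ with hydef
        have hy2 : y.2.val = if x.2.val % 2 = 0 then x.2.val + 1 else x.2.val - 1 := rfl
        have hy0 : y ≠ c0 := by
          intro h
          obtain ⟨hv1, hv2⟩ := (hCrEq _ _).1 h
          have hx1 : x.1 = ⟨0, hk0⟩ := Fin.ext hv1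
          have hxb : x.2.val < n.get ⟨0, hk0⟩ := by rw [← hx1]; exact x.2.isLt
          have hxne : x.2.val ≠ n.get ⟨0, hk0⟩ - 1 := by
            intro hh
            exact h0 ((hCrEq x c0).2 ⟨hv1, hh⟩)
          rw [hy2] at hv2
          rw [hcw0] at hv2
          by_cases hpar : x.2.val % 2 = 0
          · rw [if_pos hpar] at hv2; omega
          · rw [if_neg hpar] at hv2; omega
        have hyK : y ≠ cK := by
          intro h
          obtain ⟨hv1, hv2⟩ := (hCrEq _ _).1 h
          have hx1 : x.1 = ⟨n.length - 1, hkK⟩ := Fin.ext hv1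
          have hxb : x.2.val < n.get ⟨n.length - 1, hkK⟩ := by
            rw [← hx1]; exact x.2.isLt
          have hxne : x.2.val ≠ n.get ⟨n.length - 1, hkK⟩ - 1 := by
            intro hh
            exact hK ((hCrEq x cK).2 ⟨hv1, hh⟩)
          rw [hy2] at hv2
          rw [hcwK] at hv2
          by_cases hpar : x.2.val % 2 = 0
          · rw [if_pos hpar] at hv2; omega
          · rw [if_neg hpar] at hv2; omega
        rw [dif_neg hy0, dif_neg hyK]
        refine (hCrEq _ _).2 ⟨rfl, ?_⟩
        show (if y.2.val % 2 = 0 then y.2.val + 1 else y.2.val - 1) = x.2.val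
        rw [hy2]
        by_cases hpar : x.2.val % 2 = 0
        · rw [if_pos hpar, if_neg (by omega)]
          omega
        · rw [if_neg hpar, if_pos (by omega)]
          omega
    · -- no fixed points
      intro x
      dsimp only
      by_cases h0 : x = c0
      · subst h0
        rw [dif_pos rfl]
        exact Ne.symm hc0K
      by_cases hK : x = cK
      · subst hK
        rw [dif_neg h0, dif_pos rfl]
        exact hc0K
      · rw [dif_neg h0, dif_neg hK]
        intro h
        have hv2 := ((hCrEq _ _).1 h).2
        show False
        by_cases hpar : x.2.val % 2 = 0
        · rw [show ((⟨x.1, ⟨_, hbound x h0 hK⟩⟩ : Cr n)).2.val =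
            (if x.2.val % 2 = 0 then x.2.val + 1 else x.2.val - 1) from rfl,
            if_pos hpar] at hv2
          omega
        · rw [show ((⟨x.1, ⟨_, hbound x h0 hK⟩⟩ : Cr n)).2.val =
            (if x.2.val % 2 = 0 then x.2.val + 1 else x.2.val - 1) from rfl,
            if_neg hpar] at hv2
          omega
    · -- f c0 = cK
      dsimp only
      rw [dif_pos rfl]
    · -- syllable preserved away from the ends
      intro x h0 hK
      dsimp only
      rw [dif_neg h0, dif_neg hK]
  have hfcK : f cK = c0 := by
    have := hinv c0
    rwa [hfc0] at this
  have hNE : Nonempty (Cr n) := ⟨⟨⟨0, hk0⟩, ⟨0, hN0pos⟩⟩⟩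
  obtain ⟨σ, hσ1, hσ2⟩ := canForce_pairing (C := Cr n) f hinv hfix
  refine ⟨σ, hσ1, ?_⟩
  intro p hleg hlen hfol
  have hcl := hσ2 p hleg hlen hfol
  -- the combinatorial consequence
  have hndp : p.Nodup := hleg.1.of_map
  set S : Finset (Cr n × ℤ) := p.toFinset with hSdef
  have hmemS : ∀ m : Cr n × ℤ, m ∈ S ↔ m ∈ p := fun m => List.mem_toFinset
  have huniq : ∀ m m' : Cr n × ℤ, m ∈ p → m' ∈ p → m.1 = m'.1 → m = m' :=
    fun m m' hm hm' h => List.inj_on_of_nodup_map hleg.1 hm hm' h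
  have hcompl : ∀ c : Cr n, ∃ s : ℤ, (c, s) ∈ p := by
    intro c
    have hcard : (p.map Prod.fst).toFinset = (Finset.univ : Finset (Cr n)) := by
      apply Finset.eq_univ_of_card
      rw [List.toFinset_card_of_nodup hleg.1, List.length_map, hlen]
    have hc : c ∈ p.map Prod.fst := by
      rw [← List.mem_toFinset, hcard]; exact Finset.mem_univ c
    obtain ⟨m, hm, hm1⟩ := List.mem_map.1 hc
    exact ⟨m.2, by rw [← hm1]; simpa using hm⟩
  have hres : ∀ (i : ℕ) (hi : i < n.length),
      (result n p).getD i 0 =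
        ∑ m ∈ S.filter (fun m => m.1.1 = (⟨i, hi⟩ : Fin n.length)), m.2 := by
    intro i hi
    have hlenres : (result n p).length = n.length := by simp [result]
    rw [List.getD_eq_getElem _ _ (by rw [hlenres]; exact hi)]
    simp only [result, List.getElem_map, List.getElem_finRange]
    rw [← List.sum_toFinset Prod.snd (hndp.filter _), List.toFinset_filter]
    simp only [decide_eq_true_eq]
    rfl
  have hendsum : ∀ (i : Fin n.length) (c : Cr n) (s : ℤ), c.1 = i → (c, s) ∈ p →
      (∀ x : Cr n, x.1 = i → x ≠ c → (f x).1 = i ∧ f x ≠ c) →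
      ∑ m ∈ S.filter (fun m => m.1.1 = i), m.2 = s := by
    intro i c s hc1 hcp hpres
    have hcmem : ((c, s) : Cr n × ℤ) ∈ S.filter (fun m => m.1.1 = i) := by
      rw [Finset.mem_filter]
      exact ⟨(hmemS _).2 hcp, hc1⟩
    rw [← Finset.add_sum_erase _ _ hcmem]
    have hzero : ∑ m ∈ (S.filter (fun m => m.1.1 = i)).erase (c, s), m.2 = 0 := by
      refine Finset.sum_involution (fun m _ => ((f m.1, -m.2) : Cr n × ℤ)) ?_ ?_ ?_ ?_
      · intro a _
        exact add_neg_cancel a.2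
      · intro a _ _ h
        exact hfix a.1 (congrArg Prod.fst h)
      · intro a ha
        rw [Finset.mem_erase, Finset.mem_filter] at ha
        obtain ⟨hane, haS, hai⟩ := ha
        have hane' : a.1 ≠ c := by
          intro h
          exact hane (huniq a (c, s) ((hmemS _).1 haS) hcp h)
        obtain ⟨hf1, hf2⟩ := hpres a.1 hai hane'
        rw [Finset.mem_erase, Finset.mem_filter]
        refine ⟨?_, (hmemS _).2 (hcl a ((hmemS _).1 haS)), hf1⟩
        intro h
        exact hf2 (congrArg Prod.fst h)
      · intro a _
        show ((f (f a.1), - -a.2) : Cr n × ℤ) = a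
        rw [hinv a.1, neg_neg]
    rw [hzero, add_zero]
  obtain ⟨s0, hs0⟩ := hcompl c0
  have hsK : ((cK, -s0) : Cr n × ℤ) ∈ p := by
    have := hcl (c0, s0) hs0
    simpa [hfc0] using this
  have hsign : s0 = 1 ∨ s0 = -1 := hleg.2 (c0, s0) hs0
  have hval0 : (result n p).getD 0 0 = s0 := by
    rw [hres 0 hk0]
    refine hendsum ⟨0, hk0⟩ c0 s0 rfl hs0 ?_
    intro x hx1 hxc
    have hxK : x ≠ cK := by
      intro h
      have := ((hCrEq _ _).1 h).1
      rw [hx1, hcvK, hvmk] at this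
      omega
    constructor
    · rw [hsyl x hxc hxK, hx1]
    · intro h
      apply hxK
      have := congrArg f h
      rwa [hinv x, hfc0] at this
  have hvalK : (result n p).getD (n.length - 1) 0 = -s0 := by
    rw [hres (n.length - 1) hkK]
    refine hendsum ⟨n.length - 1, hkK⟩ cK (-s0) rfl hsK ?_
    intro x hx1 hxc
    have hx0 : x ≠ c0 := by
      intro h
      have := ((hCrEq _ _).1 h).1
      rw [hx1, hcv0, hvmk] at this
      omega
    constructor
    · rw [hsyl x hx0 hxc, hx1]
    · intro h
      apply hx0
      have := congrArg f h
      rwa [hinv x, hfcK] at this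
  refine ⟨?_, ?_, ?_⟩
  · rw [hval0]; exact hsign
  · rw [hval0, hvalK, neg_neg]
  · intro i h0i hik
    have hi : i < n.length := by omega
    rw [hres i hi]
    refine Finset.sum_involution (fun m _ => ((f m.1, -m.2) : Cr n × ℤ)) ?_ ?_ ?_ ?_
    · intro a _
      exact add_neg_cancel a.2
    · intro a _ _ h
      exact hfix a.1 (congrArg Prod.fst h)
    · intro a ha
      rw [Finset.mem_filter] at ha ⊢
      refine ⟨(hmemS _).2 (hcl a ((hmemS _).1 ha.1)), ?_⟩
      have hane0 : a.1 ≠ c0 := by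
        intro h
        have := ((hCrEq _ _).1 h).1
        rw [ha.2, hcv0, hvmk] at this
        omega
      have haneK : a.1 ≠ cK := by
        intro h
        have := ((hCrEq _ _).1 h).1
        rw [ha.2, hcvK, hvmk] at this
        omega
      rw [hsyl a.1 hane0 haneK]
      exact ha.2
    · intro a _
      show ((f (f a.1), - -a.2) : Cr n × ℤ) = a
      rw [hinv a.1, neg_neg]
end
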